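/- arXiv:2003.04738 — 2 statements merged into one kernel-verified Lean document; each statement's English description precedes it below -/
import Mathlib

section
/- Let H be a locally compact, Hausdorff, totally disconnected topological group and let N ⊆ H be a compact subgroup. Then N equals the intersection of all open compact subgroups J of H containing N. -/
open Set Filter Topology
open scoped Pointwise

/-- A compact open set `W` admits a neighborhood `T` of `1` with `W * T ⊆ W`. -/
private lemma aux_exist_mul_closure_nhd {G : Type*} [Group G] [TopologicalSpace G]
    [IsTopologicalGroup G] {W : Set G} (Wcomp : IsCompact W) (Wopen : IsOpen W) :
    ∃ T ∈ 𝓝 (1 : G), W * T ⊆ W := by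
  apply Wcomp.induction_on (p := fun S ↦ ∃ T ∈ 𝓝 (1 : G), S * T ⊆ W)
    ⟨Set.univ, by simp only [univ_mem, empty_mul, empty_subset, and_self]⟩
    (fun _ _ huv ⟨T, hT, mem⟩ ↦ ⟨T, hT, (mul_subset_mul_right huv).trans mem⟩)
    (fun U V ⟨T₁, hT₁, mem1⟩ ⟨T₂, hT₂, mem2⟩ ↦ ⟨T₁ ∩ T₂, inter_mem hT₁ hT₂, by
      rw [union_mul]
      exact union_subset (mul_subset_mul_left inter_subset_left |>.trans mem1)
        (mul_subset_mul_left inter_subset_right |>.trans mem2)⟩)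
  intro x memW
  have : (x, 1) ∈ (fun p : G × G ↦ p.1 * p.2) ⁻¹' W := by simp [memW]
  rcases isOpen_prod_iff.mp (continuous_mul.isOpen_preimage W Wopen) x 1 this with
    ⟨U, V, Uopen, Vopen, xmemU, onememV, prodsub⟩
  have h6 : U * V ⊆ W := mul_subset_iff.mpr (fun _ hx _ hy ↦ prodsub (mk_mem_prod hx hy))
  exact ⟨U ∩ W, ⟨U, Uopen.mem_nhds xmemU, W, fun _ a ↦ a, rfl⟩,
    V, IsOpen.mem_nhds Vopen onememV, fun _ a ↦ h6 ((mul_subset_mul_right inter_subset_left) a)⟩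

/-- van Dantzig: in a locally compact Hausdorff totally disconnected group, every open
neighborhood of `1` contains a compact open subgroup. -/
private lemma aux_vanDantzig {G : Type*} [Group G] [TopologicalSpace G] [IsTopologicalGroup G]
    [LocallyCompactSpace G] [T2Space G] [TotallyDisconnectedSpace G]
    {U : Set G} (hU : IsOpen U) (h1 : (1 : G) ∈ U) :
    ∃ K : Subgroup G, IsOpen (K : Set G) ∧ IsCompact (K : Set G) ∧ (K : Set G) ⊆ U := by
  obtain ⟨s, scomp, hs1, hsU⟩ := exists_compact_subset hU h1
  obtain ⟨W, hWclopen, hW1, hWs⟩ :=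
    (loc_compact_Haus_tot_disc_of_zero_dim (H := G)).mem_nhds_iff.mp
      (isOpen_interior.mem_nhds hs1)
  have Wcomp : IsCompact W := scomp.of_isClosed_subset hWclopen.isClosed (hWs.trans interior_subset)
  obtain ⟨T, hT, hWT⟩ := aux_exist_mul_closure_nhd Wcomp hWclopen.isOpen
  rcases mem_nhds_iff.mp hT with ⟨U', hU'T, U'open, h1U'⟩
  set V : Set G := U' ∩ U'⁻¹ with hVdef
  have Vopen : IsOpen V := U'open.inter U'open.inv
  have h1V : (1 : G) ∈ V := ⟨h1U', by simpa using h1U'⟩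
  have Vinv : V⁻¹ = V := by rw [hVdef, Set.inter_inv, inv_inv, Set.inter_comm]
  have hWV : W * V ⊆ W := fun a ha ↦ hWT (mul_subset_mul_left (inter_subset_left.trans hU'T) ha)
  -- the subgroup generated as union of powers of V
  let S : Subgroup G := {
    carrier := ⋃ n, V ^ (n + 1)
    mul_mem' := fun ha hb ↦ by
      rcases mem_iUnion.mp ha with ⟨k, hk⟩
      rcases mem_iUnion.mp hb with ⟨l, hl⟩
      apply mem_iUnion.mpr
      exact ⟨k + 1 + l, by rw [add_assoc, pow_add]; exact Set.mul_mem_mul hk hl⟩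
    one_mem' := mem_iUnion.mpr ⟨0, by simpa using h1V⟩
    inv_mem' := fun ha ↦ by
      rcases mem_iUnion.mp ha with ⟨k, hk⟩
      apply mem_iUnion.mpr
      refine ⟨k, ?_⟩
      rw [← Vinv]
      simpa only [inv_pow, Set.mem_inv, inv_inv] using hk }
  have Sopen : IsOpen (S : Set G) := by
    refine isOpen_iUnion (fun n ↦ ?_)
    rw [pow_succ]
    exact Vopen.mul_left
  have mulVpow : ∀ n : ℕ, W * V ^ (n + 1) ⊆ W := by
    intro n
    induction' n with n ih
    · simpa using hWV
    · rw [pow_succ, ← mul_assoc]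
      exact (Set.mul_subset_mul_right ih).trans hWV
  have hSW : (S : Set G) ⊆ W := by
    intro y hy
    rcases mem_iUnion.mp hy with ⟨n, hn⟩
    exact mulVpow n ⟨1, hW1, y, hn, one_mul y⟩
  have Sclosed : IsClosed (S : Set G) := S.isClosed_of_isOpen Sopen
  exact ⟨S, Sopen, Wcomp.of_isClosed_subset Sclosed hSW,
    hSW.trans (hWs.trans (interior_subset.trans hsU))⟩

/-- In a locally compact, Hausdorff, totally disconnected topological group,
a compact subgroup equals the intersection of all open compact subgroups containing it. -/
theorem compact_subgroup_eq_iInter_open_compact_subgroups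
    {H : Type*} [Group H] [TopologicalSpace H] [IsTopologicalGroup H]
    [LocallyCompactSpace H] [T2Space H] [TotallyDisconnectedSpace H]
    (N : Subgroup H) (hN : IsCompact (N : Set H)) :
    (N : Set H) =
      ⋂ J ∈ {J : Subgroup H | IsOpen (J : Set H) ∧ IsCompact (J : Set H) ∧ N ≤ J},
        (J : Set H) := by
  apply Set.Subset.antisymm
  · exact fun y hy ↦ Set.mem_iInter₂.mpr fun J hJ ↦ hJ.2.2 hy
  intro x hx
  by_contra hxN
  -- the compact set of translates `n⁻¹ * x`, avoiding 1
  have Ccomp : IsCompact ((fun n : H ↦ n⁻¹ * x) '' (N : Set H)) :=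
    hN.image (by continuity)
  have h1C : (1 : H) ∉ (fun n : H ↦ n⁻¹ * x) '' (N : Set H) := by
    rintro ⟨n, hn, hn1⟩
    exact hxN (inv_mul_eq_one.mp hn1 ▸ hn)
  -- a compact open subgroup avoiding all translates
  obtain ⟨K, Kopen, Kcomp, hKC⟩ := aux_vanDantzig (G := H)
    (Ccomp.isClosed.isOpen_compl) h1C
  -- the intersection of the `N`-conjugates of `K`
  let L : Subgroup H := {
    carrier := {h : H | ∀ n ∈ N, n * h * n⁻¹ ∈ K}
    one_mem' := fun n _ ↦ by simpa using K.one_mem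
    mul_mem' := fun {a b} ha hb n hn ↦ by
      have : n * (a * b) * n⁻¹ = (n * a * n⁻¹) * (n * b * n⁻¹) := by group
      rw [this]
      exact K.mul_mem (ha n hn) (hb n hn)
    inv_mem' := fun {a} ha n hn ↦ by
      have : n * a⁻¹ * n⁻¹ = (n * a * n⁻¹)⁻¹ := by group
      rw [this]
      exact K.inv_mem (ha n hn) }
  have hLK : (L : Set H) ⊆ (K : Set H) := fun h hh ↦ by simpa using hh 1 N.one_mem
  have Lclosed : IsClosed (L : Set H) := by
    have : (L : Set H) = ⋂ n ∈ (N : Set H), (fun h : H ↦ n * h * n⁻¹) ⁻¹' (K : Set H) := by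
      ext h
      simp [L, Set.mem_iInter]
    rw [this]
    exact isClosed_biInter fun n _ ↦
      (Kcomp.isClosed).preimage (by continuity)
  have Lcomp : IsCompact (L : Set H) := Kcomp.of_isClosed_subset Lclosed hLK
  -- L is open: a small neighborhood of 1 is contained in all conjugates of K
  have Lopen : IsOpen (L : Set H) := by
    have key : ∃ V : Set H, IsOpen V ∧ (1 : H) ∈ V ∧ ∀ n ∈ N, ∀ v ∈ V, n * v * n⁻¹ ∈ K := by
      have cont : Continuous (fun p : H × H ↦ p.1 * p.2 * p.1⁻¹) := by continuity
      have hpre : IsOpen ((fun p : H × H ↦ p.1 * p.2 * p.1⁻¹) ⁻¹' (K : Set H)) :=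
        cont.isOpen_preimage _ Kopen
      choose! Un Vn hUn hVn hnU h1V hsub using fun n (hn : n ∈ (N : Set H)) ↦
        isOpen_prod_iff.mp hpre n 1 (by simpa using K.one_mem)
      obtain ⟨t, htcov⟩ := hN.elim_nhds_subcover' (fun n hn ↦ Un n)
        (fun n hn ↦ (hUn n hn).mem_nhds (hnU n hn))
      refine ⟨⋂ n ∈ t, Vn n, ?_, ?_, ?_⟩
      · exact isOpen_biInter_finset fun n _ ↦ hVn n n.2
      · exact Set.mem_iInter₂.mpr fun n _ ↦ h1V n n.2
      · intro n hn v hv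
        rcases Set.mem_iUnion₂.mp (htcov hn) with ⟨m, hm, hnm⟩
        exact hsub m m.2 (Set.mk_mem_prod hnm (Set.mem_iInter₂.mp hv m hm))
    obtain ⟨V, Vopen, h1V, hV⟩ := key
    refine Subgroup.isOpen_of_mem_nhds L (Filter.mem_of_superset (Vopen.mem_nhds h1V) ?_)
    exact fun v hv n hn ↦ hV n hn v hv
  -- N normalizes L
  have hnorm : ∀ m ∈ N, ∀ l ∈ L, m * l * m⁻¹ ∈ L := by
    intro m hm l hl n hn
    have : n * (m * l * m⁻¹) * n⁻¹ = (n * m) * l * (n * m)⁻¹ := by group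
    rw [this]
    exact hl (n * m) (N.mul_mem hn hm)
  -- the product subgroup J = N * L
  let J : Subgroup H := {
    carrier := (N : Set H) * (L : Set H)
    one_mem' := ⟨1, N.one_mem, 1, L.one_mem, one_mul 1⟩
    mul_mem' := fun {a b} ha hb ↦ by
      obtain ⟨n₁, hn₁, l₁, hl₁, rfl⟩ := ha
      obtain ⟨n₂, hn₂, l₂, hl₂, rfl⟩ := hb
      refine ⟨n₁ * n₂, N.mul_mem hn₁ hn₂, (n₂⁻¹ * l₁ * n₂) * l₂,
        L.mul_mem ?_ hl₂, by group⟩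
      have := hnorm n₂⁻¹ (N.inv_mem hn₂) l₁ hl₁
      simpa using this
    inv_mem' := fun {a} ha ↦ by
      obtain ⟨n, hn, l, hl, rfl⟩ := ha
      exact ⟨n⁻¹, N.inv_mem hn, n * l⁻¹ * n⁻¹, hnorm n hn l⁻¹ (L.inv_mem hl), by group⟩ }
  have hLJ : (L : Set H) ⊆ (J : Set H) := fun l hl ↦ ⟨1, N.one_mem, l, hl, one_mul l⟩
  have Jopen : IsOpen (J : Set H) :=
    Subgroup.isOpen_of_mem_nhds J (Filter.mem_of_superset (Lopen.mem_nhds L.one_mem) hLJ)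
  have Jcomp : IsCompact (J : Set H) := hN.mul Lcomp
  have hNJ : N ≤ J := fun n hn ↦ ⟨n, hn, 1, L.one_mem, mul_one n⟩
  have hxJ : x ∈ (J : Set H) := Set.mem_iInter₂.mp hx J ⟨Jopen, Jcomp, hNJ⟩
  obtain ⟨n, hn, l, hl, hnl⟩ := hxJ
  exact hKC (hLK hl) ⟨n, hn, by rw [← hnl]; group⟩
end

section
/- Let t : ℤ → ℤ be a function satisfying: t is strictly decreasing, t(t(i)) = i for all i, and t(i + qr) = t(i) − qr for all i, q ∈ ℤ and a fixed positive integer r. Then there exists a ∈ ℤ with t(i) = −i − a for all i, and there is a unique i₀ ∈ ℤ with i₀ − t(i₀) ∈ {0, 1}. -/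
/-- A strictly decreasing involution `t : ℤ → ℤ` with `t (i + q*r) = t i - q*r`
(for a fixed positive integer `r`) is of the form `t i = -i - a`, and there is a unique
`i₀` with `i₀ - t i₀ ∈ {0, 1}`. -/
theorem strictAnti_involution_eq_neg_sub
    (r : ℤ) (hr : 0 < r) (t : ℤ → ℤ) (ht : StrictAnti t)
    (hinv : ∀ i, t (t i) = i)
    (hper : ∀ i q, t (i + q * r) = t i - q * r) :
    (∃ a : ℤ, ∀ i, t i = -i - a) ∧
      (∃! i₀ : ℤ, i₀ - t i₀ = 0 ∨ i₀ - t i₀ = 1) := by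
  have hstep : ∀ (i : ℤ) (n : ℕ), t (i + n) ≤ t i - n := by
    intro i n
    induction n with
    | zero => simp
    | succ n ih =>
      have h1 : t (i + n + 1) < t (i + n) := ht (by omega)
      push_cast
      push_cast at ih
      have : (i + (n + 1) : ℤ) = i + n + 1 := by ring
      rw [this]
      omega
  have key : ∀ i : ℤ, t (i + 1) = t i - 1 := by
    intro i
    have h1 : t (i + r) = t i - r := by
      have := hper i 1; simpa using this
    have h2 : t ((i + 1) + ((r - 1).toNat : ℤ)) ≤ t (i + 1) - (r - 1).toNat := hstep (i + 1) _
    have hrn : ((r - 1).toNat : ℤ) = r - 1 := Int.toNat_of_nonneg (by omega)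
    rw [hrn] at h2
    have : (i + 1) + (r - 1) = i + r := by ring
    rw [this, h1] at h2
    have h3 : t (i + 1) < t i := ht (by omega)
    omega
  have hform : ∀ i : ℤ, t i = -i - (-t 0) := by
    intro i
    induction i using Int.induction_on with
    | zero => ring
    | succ n ih => rw [key n, ih]; push_cast; ring
    | pred n ih =>
      have := key (-(n : ℤ) - 1)
      have h : -(n : ℤ) - 1 + 1 = -(n : ℤ) := by ring
      rw [h] at this
      rw [ih] at this
      push_cast
      omega
  constructor
  · exact ⟨-t 0, hform⟩
  · set a : ℤ := -t 0 with ha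
    rcases Int.even_or_odd a with ⟨k, hk⟩ | ⟨k, hk⟩
    · refine ⟨-k, Or.inl (by rw [hform]; omega), ?_⟩
      intro j hj
      rw [hform] at hj
      omega
    · refine ⟨-k, Or.inr (by rw [hform]; omega), ?_⟩
      intro j hj
      rw [hform] at hj
      omega
end
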